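/- Fix α ∈ (0,1) and let f(w) = |w|^{(2-α)/(1-α)} on ℝ. Then there do not exist constants L₀, L₁ > 0 such that for all w, w' ∈ ℝ, |f'(w') - f'(w)| ≤ |w'-w|·(L₀ + L₁|f'(w)|). That is, f does not belong to the asymmetric generalized-smooth class L*_asym. -/

import Mathlib

theorem poly_not_in_asym_class (α : ℝ) (hα : α ∈ Set.Ioo (0:ℝ) 1)
    (f' : ℝ → ℝ)
    (hf' : ∀ w, f' w = ((2 - α) / (1 - α)) * |w| ^ ((1:ℝ) / (1 - α)) * Real.sign w) :
    ¬ ∃ L₀ L₁ : ℝ, 0 < L₀ ∧ 0 < L₁ ∧ ∀ w w' : ℝ,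
      |f' w' - f' w| ≤ |w' - w| * (L₀ + L₁ * |f' w|) := by
  rintro ⟨L₀, L₁, hL₀, hL₁, h⟩
  obtain ⟨hα0, hα1⟩ := hα
  have h1α : (0:ℝ) < 1 - α := by linarith
  set c : ℝ := (2 - α) / (1 - α) with hc
  have hcpos : 0 < c := div_pos (by linarith) h1α
  set q : ℝ := α / (1 - α) with hq
  have hqpos : 0 < q := div_pos hα0 h1α
  set t : ℝ := ((L₀ + 1) / c) ^ (1 / q) with ht
  have hbase : (0:ℝ) < (L₀ + 1) / c := div_pos (by linarith) hcpos
  have htpos : 0 < t := Real.rpow_pos_of_pos hbase _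
  have htq : t ^ q = (L₀ + 1) / c := by
    rw [ht, ← Real.rpow_mul hbase.le, one_div_mul_cancel hqpos.ne', Real.rpow_one]
  have hf0 : f' 0 = 0 := by
    rw [hf' 0, Real.sign_zero, mul_zero]
  have hexp : (1:ℝ) / (1 - α) = 1 + q := by
    rw [hq]; field_simp; ring
  have hft : f' t = c * (t * t ^ q) := by
    rw [hf' t, Real.sign_of_pos htpos, mul_one, abs_of_pos htpos, hexp,
      Real.rpow_add htpos, Real.rpow_one]
  have key := h 0 t
  rw [hf0, sub_zero, sub_zero, abs_zero, mul_zero, add_zero, abs_of_pos htpos,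
    hft, abs_of_pos (by positivity)] at key
  -- key : c * (t * t ^ q) ≤ t * L₀
  rw [htq] at key
  have : c * ((L₀ + 1) / c) ≤ L₀ := by
    have := (mul_le_mul_iff_right₀ htpos).mp (by linarith [key] : t * (c * ((L₀ + 1) / c)) ≤ t * L₀)
    exact this
  rw [mul_div_cancel₀ _ hcpos.ne'] at this
  linarith
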